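/- Suppose there exist ω ∈ ℝ and Y° ∈ 𝒴 such that Y° maximizes Y ↦ Δ(Y) − ∑_i (Fin.snoc w ω) i · (φ(Y*) i − φ(Y) i) over 𝒴 and ω = ν·(φ(Y*) t − φ(Y°) t), where the index t denotes the last coordinate. Then F_t(w) − inf_{w' : Fin (t+1) → ℝ} F_{t+1}(w') ≥ (ν²/2)·(φ(Y*) t − φ(Y°) t)². (Proposition 2, made precise: the decrease of the objective value between iterations t and t+1 is at least a constant multiple of the squared joint-feature-map gap of the newly added weak learner between the true ordering Y* and the maximizing ordering Y°.) -/

import Mathlib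

/-- Proposition 2: the decrease of the objective value between iterations t and t+1 is
at least (ν²/2)·(φ(Y*)_t − φ(Y°)_t)². -/
theorem stmt_2 (t : ℕ) (𝒴 : Type*) [Fintype 𝒴] [Nonempty 𝒴]
    (Δ : 𝒴 → ℝ) (Ystar : 𝒴) (hΔ : Δ Ystar = 0)
    (ν : ℝ) (hν : 0 ≤ ν)
    (φ : 𝒴 → (Fin (t + 1) → ℝ))
    (F₁ : (Fin (t + 1) → ℝ) → ℝ)
    (hF₁ : ∀ w : Fin (t + 1) → ℝ,
      F₁ w = (1 / 2) * ∑ i, (w i) ^ 2 +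
        ν * Finset.univ.sup' Finset.univ_nonempty
          (fun Y : 𝒴 => Δ Y - ∑ i, w i * (φ Ystar i - φ Y i)))
    (F₀ : (Fin t → ℝ) → ℝ)
    (hF₀ : ∀ w : Fin t → ℝ,
      F₀ w = (1 / 2) * ∑ i, (w i) ^ 2 +
        ν * Finset.univ.sup' Finset.univ_nonempty
          (fun Y : 𝒴 => Δ Y - ∑ i : Fin t, w i * (φ Ystar i.castSucc - φ Y i.castSucc)))
    (w : Fin t → ℝ) (ω : ℝ) (Ycirc : 𝒴)
    (hYcirc : ∀ Y : 𝒴,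
      Δ Y - ∑ i, (Fin.snoc w ω : Fin (t + 1) → ℝ) i * (φ Ystar i - φ Y i) ≤
      Δ Ycirc - ∑ i, (Fin.snoc w ω : Fin (t + 1) → ℝ) i * (φ Ystar i - φ Ycirc i))
    (hω : ω = ν * (φ Ystar (Fin.last t) - φ Ycirc (Fin.last t))) :
    F₀ w - (⨅ w' : Fin (t + 1) → ℝ, F₁ w') ≥
      (ν ^ 2 / 2) * (φ Ystar (Fin.last t) - φ Ycirc (Fin.last t)) ^ 2 := by

  set g : ℝ := φ Ystar (Fin.last t) - φ Ycirc (Fin.last t) with hg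
  -- F₁ is bounded below by 0
  have hbdd : ∀ w' : Fin (t + 1) → ℝ, 0 ≤ F₁ w' := by
    intro w'
    rw [hF₁]
    have h1 : (0:ℝ) ≤ Finset.univ.sup' Finset.univ_nonempty
        (fun Y : 𝒴 => Δ Y - ∑ i, w' i * (φ Ystar i - φ Y i)) := by
      have := Finset.le_sup' (fun Y : 𝒴 => Δ Y - ∑ i, w' i * (φ Ystar i - φ Y i))
        (Finset.mem_univ Ystar)
      simp [hΔ] at this
      exact this
    have h2 : (0:ℝ) ≤ ∑ i, (w' i) ^ 2 := Finset.sum_nonneg fun i _ => sq_nonneg _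
    positivity
  have hinf : (⨅ w' : Fin (t + 1) → ℝ, F₁ w') ≤ F₁ (Fin.snoc w ω) :=
    ciInf_le ⟨0, fun x ⟨w', hw'⟩ => hw' ▸ hbdd w'⟩ _
  set S : ℝ := ∑ i : Fin t, w i * (φ Ystar i.castSucc - φ Ycirc i.castSucc) with hS
  -- sum splitting
  have hsum : ∀ Y : 𝒴, ∑ i, (Fin.snoc w ω : Fin (t + 1) → ℝ) i * (φ Ystar i - φ Y i)
      = (∑ i : Fin t, w i * (φ Ystar i.castSucc - φ Y i.castSucc))
        + ω * (φ Ystar (Fin.last t) - φ Y (Fin.last t)) := by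
    intro Y
    rw [Fin.sum_univ_castSucc]
    simp [Fin.snoc_castSucc, Fin.snoc_last]
  have hsq : ∑ i, ((Fin.snoc w ω : Fin (t + 1) → ℝ) i) ^ 2
      = (∑ i : Fin t, (w i) ^ 2) + ω ^ 2 := by
    rw [Fin.sum_univ_castSucc]
    simp [Fin.snoc_castSucc, Fin.snoc_last]
  -- sup' in F₁ at snoc equals value at Ycirc
  have hsup1 : Finset.univ.sup' Finset.univ_nonempty
      (fun Y : 𝒴 => Δ Y - ∑ i, (Fin.snoc w ω : Fin (t + 1) → ℝ) i * (φ Ystar i - φ Y i))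
      = Δ Ycirc - S - ω * g := by
    apply le_antisymm
    · apply Finset.sup'_le
      intro Y _
      have := hYcirc Y
      rw [hsum Ycirc, ← hS, ← hg] at this
      linarith
    · have := Finset.le_sup'
        (fun Y : 𝒴 => Δ Y - ∑ i, (Fin.snoc w ω : Fin (t + 1) → ℝ) i * (φ Ystar i - φ Y i))
        (Finset.mem_univ Ycirc)
      rw [hsum Ycirc, ← hS, ← hg] at this
      linarith
  have hF1val : F₁ (Fin.snoc w ω) = (1/2) * (∑ i : Fin t, (w i) ^ 2) + ω ^ 2 / 2
      + ν * (Δ Ycirc - S - ω * g) := by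
    rw [hF₁, hsq, hsup1]; ring
  -- F₀ lower bound
  have hF0 : F₀ w ≥ (1/2) * (∑ i : Fin t, (w i) ^ 2) + ν * (Δ Ycirc - S) := by
    rw [hF₀]
    have := Finset.le_sup'
      (fun Y : 𝒴 => Δ Y - ∑ i : Fin t, w i * (φ Ystar i.castSucc - φ Y i.castSucc))
      (Finset.mem_univ Ycirc)
    have hmul : ν * (Δ Ycirc - S) ≤ ν * Finset.univ.sup' Finset.univ_nonempty
        (fun Y : 𝒴 => Δ Y - ∑ i : Fin t, w i * (φ Ystar i.castSucc - φ Y i.castSucc)) :=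
      mul_le_mul_of_nonneg_left this hν
    linarith
  have : F₀ w - F₁ (Fin.snoc w ω) ≥ (ν ^ 2 / 2) * g ^ 2 := by
    rw [hF1val, hω]
    nlinarith [hF0]
  linarith
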